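/- Every point of ℙ¹(ℚ) lies in the orbit of the three-point set {[0:1], [1:1], [1:0]} under the group generated by the projective actions of M₁, M₂ and M₃. -/
import Mathlib


noncomputable section

/-- The projective line over `ℚ`. -/
abbrev PQ : Type := Projectivization ℚ (Fin 2 → ℚ)

/-- The matrices `M₁ = [[−1,2],[0,1]]`, `M₂ = [[1,0],[2,−1]]`, `M₃ = [[−1,0],[0,1]]`
over `ℚ`. -/
def refM : Fin 3 → Matrix (Fin 2) (Fin 2) ℚ :=
  ![!![-1, 2; 0, 1], !![1, 0; 2, -1], !![-1, 0; 0, 1]]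

lemma refM_sq (i : Fin 3) : refM i * refM i = 1 := by
  fin_cases i <;>
    simp [refM, Matrix.mul_fin_two, Matrix.one_fin_two]

lemma refM_toLin'_injective (i : Fin 3) :
    Function.Injective (Matrix.toLin' (refM i)) := by
  intro x y hxy
  have h2 : ∀ v : Fin 2 → ℚ, Matrix.toLin' (refM i) (Matrix.toLin' (refM i) v) = v := by
    intro v
    rw [Matrix.toLin'_apply, Matrix.toLin'_apply, Matrix.mulVec_mulVec, refM_sq,
      Matrix.one_mulVec]
  have := congrArg (Matrix.toLin' (refM i)) hxy
  rwa [h2, h2] at this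

/-- The projective action of `Mᵢ` on `ℙ¹(ℚ)`. -/
def gmap (i : Fin 3) : PQ → PQ :=
  Projectivization.map (Matrix.toLin' (refM i)) (refM_toLin'_injective i)

/-- The point `[0:1] ∈ ℙ¹(ℚ)`. -/
def pt0 : PQ := Projectivization.mk ℚ ![0, 1] (by
  intro h; simpa using congrFun h 1)

/-- The point `[1:1] ∈ ℙ¹(ℚ)`. -/
def pt1 : PQ := Projectivization.mk ℚ ![1, 1] (by
  intro h; simpa using congrFun h 0)

/-- The point `[1:0] ∈ ℙ¹(ℚ)`. -/
def ptInf : PQ := Projectivization.mk ℚ ![1, 0] (by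
  intro h; simpa using congrFun h 0)

/-- Coordinate constructor for points of `PQ`. -/
def pmk (a b : ℚ) (h : a ≠ 0 ∨ b ≠ 0) : PQ :=
  Projectivization.mk ℚ ![a, b] (by
    intro h0
    rcases h with h | h
    · exact h (by simpa using congrFun h0 0)
    · exact h (by simpa using congrFun h0 1))

lemma pmk_eq_pmk {a b c d : ℚ} (h : a ≠ 0 ∨ b ≠ 0) (h' : c ≠ 0 ∨ d ≠ 0)
    (k : ℚ) (hk1 : k * c = a) (hk2 : k * d = b) : pmk a b h = pmk c d h' := by
  apply (Projectivization.mk_eq_mk_iff' ℚ _ _ _ _).2 ⟨k, ?_⟩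
  funext i
  fin_cases i <;> simp [← hk1, ← hk2]

lemma step0 (a b : ℚ) (h : a ≠ 0 ∨ b ≠ 0) (h' : 2*b - a ≠ 0 ∨ b ≠ 0) :
    pmk a b h = gmap 0 (pmk (2*b - a) b h') := by
  show _ = Projectivization.map _ _ (Projectivization.mk ℚ _ _)
  rw [Projectivization.map_mk]
  apply (Projectivization.mk_eq_mk_iff' ℚ _ _ _ _).2 ⟨1, ?_⟩
  funext i
  fin_cases i <;>
    simp [refM, Matrix.toLin'_apply, Matrix.mulVec, dotProduct,
      Fin.sum_univ_two] <;> ring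

lemma step1 (a b : ℚ) (h : a ≠ 0 ∨ b ≠ 0) (h' : a ≠ 0 ∨ 2*a - b ≠ 0) :
    pmk a b h = gmap 1 (pmk a (2*a - b) h') := by
  show _ = Projectivization.map _ _ (Projectivization.mk ℚ _ _)
  rw [Projectivization.map_mk]
  apply (Projectivization.mk_eq_mk_iff' ℚ _ _ _ _).2 ⟨1, ?_⟩
  funext i
  fin_cases i <;>
    simp [refM, Matrix.toLin'_apply, Matrix.mulVec, dotProduct,
      Fin.sum_univ_two] <;> ring

lemma step2 (a b : ℚ) (h : a ≠ 0 ∨ b ≠ 0) (h' : -a ≠ 0 ∨ b ≠ 0) :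
    pmk a b h = gmap 2 (pmk (-a) b h') := by
  show _ = Projectivization.map _ _ (Projectivization.mk ℚ _ _)
  rw [Projectivization.map_mk]
  apply (Projectivization.mk_eq_mk_iff' ℚ _ _ _ _).2 ⟨1, ?_⟩
  funext i
  fin_cases i <;>
    simp [refM, Matrix.toLin'_apply, Matrix.mulVec, dotProduct,
      Fin.sum_univ_two] <;> ring

lemma int_ne_cast {a b : ℤ} (h : a ≠ 0 ∨ b ≠ 0) : (a : ℚ) ≠ 0 ∨ (b : ℚ) ≠ 0 := by
  rcases h with h | h
  · exact Or.inl (by exact_mod_cast h)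
  · exact Or.inr (by exact_mod_cast h)

lemma key (n : ℕ) : ∀ a b : ℤ, a.natAbs + b.natAbs ≤ n →
    ∀ (hab : a ≠ 0 ∨ b ≠ 0),
    ∃ (l : List (Fin 3)) (P₀ : PQ),
      (P₀ = pt0 ∨ P₀ = pt1 ∨ P₀ = ptInf) ∧
      pmk (a : ℚ) (b : ℚ) (int_ne_cast hab) =
        l.foldr (fun i Q => gmap i Q) P₀ := by
  induction n using Nat.strong_induction_on with
  | _ n IH =>
    intro a b hn hab
    rcases eq_or_ne b 0 with hb | hb
    · -- point at infinity
      subst hb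
      have ha : a ≠ 0 := by tauto
      refine ⟨[], ptInf, Or.inr (Or.inr rfl), ?_⟩
      have : pmk (a : ℚ) (0 : ℚ) (int_ne_cast hab) =
          pmk 1 0 (Or.inl one_ne_zero) :=
        pmk_eq_pmk _ _ (a : ℚ) (by ring) (by ring)
      simpa [ptInf, pmk] using this
    rcases eq_or_ne a 0 with ha | ha
    · subst ha
      refine ⟨[], pt0, Or.inl rfl, ?_⟩
      have : pmk (0 : ℚ) (b : ℚ) (int_ne_cast hab) =
          pmk 0 1 (Or.inr one_ne_zero) :=
        pmk_eq_pmk _ _ (b : ℚ) (by ring) (by ring)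
      simpa [pt0, pmk] using this
    rcases eq_or_ne a b with hone | hone
    · subst hone
      refine ⟨[], pt1, Or.inr (Or.inl rfl), ?_⟩
      have : pmk (a : ℚ) (a : ℚ) (int_ne_cast hab) =
          pmk 1 1 (Or.inl one_ne_zero) :=
        pmk_eq_pmk _ _ (a : ℚ) (by ring) (by ring)
      simpa [pt1, pmk] using this
    rcases eq_or_ne a (-b) with hmone | hmone
    · subst hmone
      have hb' : ((-b : ℤ) : ℚ) ≠ 0 ∨ (b : ℚ) ≠ 0 := int_ne_cast hab
      have h1 : ((b : ℤ) : ℚ) ≠ 0 ∨ (b : ℚ) ≠ 0 := Or.inr (by exact_mod_cast hb)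
      refine ⟨[2], pt1, Or.inr (Or.inl rfl), ?_⟩
      have e1 : pmk ((-b : ℤ) : ℚ) (b : ℚ) hb' =
          gmap 2 (pmk (-((-b : ℤ) : ℚ)) (b : ℚ)
            (Or.inr (by exact_mod_cast hb))) := step2 _ _ _ _
      have e2 : pmk (-((-b : ℤ) : ℚ)) (b : ℚ) (Or.inr (by exact_mod_cast hb)) =
          pmk 1 1 (Or.inl one_ne_zero) :=
        pmk_eq_pmk _ _ (b : ℚ) (by push_cast; ring) (by ring)
      rw [e1, e2]
      simp [pt1, pmk, List.foldr]
    -- main descent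
    have hsum : 0 < a.natAbs + b.natAbs := by
      have := Int.natAbs_pos.2 ha; omega
    rcases lt_trichotomy a.natAbs b.natAbs with hlt | heq | hgt
    · -- |a| < |b| : apply M₂ (possibly after M₃)
      rcases lt_or_gt_of_ne (mul_ne_zero ha hb) with hneg | hpos
      · -- a*b < 0 : use M₃ then M₂ on (-a, -2a - b)
        have hdec : a.natAbs + (2*a + b).natAbs < n := by
          rcases lt_trichotomy a 0 with h1 | h1 | h1
          · have : 0 < b := by nlinarith
            omega
          · omega
          · have : b < 0 := by nlinarith
            omega
        have hab2 : a ≠ 0 ∨ (2*a + b) ≠ 0 := Or.inl ha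
        obtain ⟨l, P₀, hP₀, hfold⟩ := IH _ (by omega) a (2*a + b) le_rfl hab2
        refine ⟨2 :: 1 :: l, P₀, hP₀, ?_⟩
        have e1 : pmk (a : ℚ) (b : ℚ) (int_ne_cast hab) =
            gmap 2 (pmk (-(a : ℚ)) (b : ℚ) (Or.inl (by
              simp only [neg_ne_zero]; exact_mod_cast ha))) := step2 _ _ _ _
        have e2 : pmk (-(a : ℚ)) (b : ℚ) (Or.inl (by
              simp only [neg_ne_zero]; exact_mod_cast ha)) =
            gmap 1 (pmk (-(a : ℚ)) (2*(-(a : ℚ)) - (b : ℚ)) (Or.inl (by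
              simp only [neg_ne_zero]; exact_mod_cast ha))) := step1 _ _ _ _
        have e3 : pmk (-(a : ℚ)) (2*(-(a : ℚ)) - (b : ℚ)) (Or.inl (by
              simp only [neg_ne_zero]; exact_mod_cast ha)) =
            pmk ((a : ℤ) : ℚ) (((2*a + b : ℤ) : ℚ)) (int_ne_cast hab2) :=
          pmk_eq_pmk _ _ (-1) (by push_cast; ring) (by push_cast; ring)
        rw [e1, e2, e3, hfold]
        simp [List.foldr]
      · -- a*b > 0 : use M₂ on (a, 2a - b)
        have hdec : a.natAbs + (2*a - b).natAbs < n := by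
          rcases lt_trichotomy a 0 with h1 | h1 | h1
          · have : b < 0 := by nlinarith
            omega
          · omega
          · have : 0 < b := by nlinarith
            omega
        have hab2 : a ≠ 0 ∨ (2*a - b) ≠ 0 := Or.inl ha
        obtain ⟨l, P₀, hP₀, hfold⟩ := IH _ (by omega) a (2*a - b) le_rfl hab2
        refine ⟨1 :: l, P₀, hP₀, ?_⟩
        have e1 : pmk (a : ℚ) (b : ℚ) (int_ne_cast hab) =
            gmap 1 (pmk (a : ℚ) (2*(a : ℚ) - (b : ℚ)) (Or.inl (by
              exact_mod_cast ha))) := step1 _ _ _ _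
        have e2 : pmk (a : ℚ) (2*(a : ℚ) - (b : ℚ)) (Or.inl (by exact_mod_cast ha)) =
            pmk ((a : ℤ) : ℚ) (((2*a - b : ℤ) : ℚ)) (int_ne_cast hab2) :=
          pmk_eq_pmk _ _ 1 (by push_cast; ring) (by push_cast; ring)
        rw [e1, e2, hfold]
        simp [List.foldr]
    · -- |a| = |b| : already handled (a = b or a = -b)
      exfalso
      rcases Int.natAbs_eq_natAbs_iff.mp heq with h | h
      · exact hone h
      · exact hmone h
    · -- |a| > |b| : apply M₁ (possibly after M₃)
      rcases lt_or_gt_of_ne (mul_ne_zero ha hb) with hneg | hpos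
      ·
        have hdec : (2*b + a).natAbs + b.natAbs < n := by
          rcases lt_trichotomy a 0 with h1 | h1 | h1
          · have : 0 < b := by nlinarith
            omega
          · omega
          · have : b < 0 := by nlinarith
            omega
        have hab2 : (2*b + a) ≠ 0 ∨ b ≠ 0 := Or.inr hb
        obtain ⟨l, P₀, hP₀, hfold⟩ := IH _ (by omega) (2*b + a) b le_rfl hab2
        refine ⟨2 :: 0 :: l, P₀, hP₀, ?_⟩
        have e1 : pmk (a : ℚ) (b : ℚ) (int_ne_cast hab) =
            gmap 2 (pmk (-(a : ℚ)) (b : ℚ) (Or.inr (by exact_mod_cast hb))) :=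
          step2 _ _ _ _
        have e2 : pmk (-(a : ℚ)) (b : ℚ) (Or.inr (by exact_mod_cast hb)) =
            gmap 0 (pmk (2*(b : ℚ) - (-(a : ℚ))) (b : ℚ)
              (Or.inr (by exact_mod_cast hb))) := step0 _ _ _ _
        have e3 : pmk (2*(b : ℚ) - (-(a : ℚ))) (b : ℚ) (Or.inr (by exact_mod_cast hb)) =
            pmk (((2*b + a : ℤ) : ℚ)) ((b : ℤ) : ℚ) (int_ne_cast hab2) :=
          pmk_eq_pmk _ _ 1 (by push_cast; ring) (by push_cast; ring)
        rw [e1, e2, e3, hfold]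
        simp [List.foldr]
      · -- a*b > 0 : use M₁ on (2b - a, b)
        have hdec : (2*b - a).natAbs + b.natAbs < n := by
          rcases lt_trichotomy a 0 with h1 | h1 | h1
          · have : b < 0 := by nlinarith
            omega
          · omega
          · have : 0 < b := by nlinarith
            omega
        have hab2 : (2*b - a) ≠ 0 ∨ b ≠ 0 := Or.inr hb
        obtain ⟨l, P₀, hP₀, hfold⟩ := IH _ (by omega) (2*b - a) b le_rfl hab2
        refine ⟨0 :: l, P₀, hP₀, ?_⟩
        have e1 : pmk (a : ℚ) (b : ℚ) (int_ne_cast hab) =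
            gmap 0 (pmk (2*(b : ℚ) - (a : ℚ)) (b : ℚ)
              (Or.inr (by exact_mod_cast hb))) := step0 _ _ _ _
        have e2 : pmk (2*(b : ℚ) - (a : ℚ)) (b : ℚ) (Or.inr (by exact_mod_cast hb)) =
            pmk (((2*b - a : ℤ) : ℚ)) ((b : ℤ) : ℚ) (int_ne_cast hab2) :=
          pmk_eq_pmk _ _ 1 (by push_cast; ring) (by push_cast; ring)
        rw [e1, e2, hfold]
        simp [List.foldr]

/-- Every point of `ℙ¹(ℚ)` lies in the orbit of `{[0:1], [1:1], [1:0]}` under the group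
generated by the projective actions of `M₁, M₂, M₃` (each of which is an involution, so
group elements are exactly finite words in the three generators). -/

theorem statement18 (P : PQ) :
    ∃ (l : List (Fin 3)) (P₀ : PQ),
      (P₀ = pt0 ∨ P₀ = pt1 ∨ P₀ = ptInf) ∧
      P = l.foldr (fun i Q => gmap i Q) P₀ := by
  induction P using Projectivization.ind with
  | h v hv =>
    set x := v 0 with hx
    set y := v 1 with hy
    have hveq : v = ![x, y] := by
      funext i; fin_cases i <;> rfl
    have hxy : x ≠ 0 ∨ y ≠ 0 := by
      by_contra hc
      push_neg at hc
      apply hv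
      funext i; fin_cases i <;> simp [hc.1, hc.2, ← hx, ← hy]
    set m : ℤ := x.num * (y.den : ℤ) with hm
    set k : ℤ := y.num * (x.den : ℤ) with hk
    have hdx : ((x.den : ℚ)) ≠ 0 := by exact_mod_cast x.den_ne_zero
    have hdy : ((y.den : ℚ)) ≠ 0 := by exact_mod_cast y.den_ne_zero
    have hcx : ((x.den : ℚ)) * x = (x.num : ℚ) := by
      rw [mul_comm]; exact_mod_cast Rat.mul_den_eq_num x
    have hcy : ((y.den : ℚ)) * y = (y.num : ℚ) := by
      rw [mul_comm]; exact_mod_cast Rat.mul_den_eq_num y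
    have hme : ((m : ℚ)) = (x.den : ℚ) * (y.den : ℚ) * x := by
      push_cast [hm]; rw [mul_comm ((x.den : ℚ)) ((y.den : ℚ)), mul_assoc, hcx]; ring
    have hke : ((k : ℚ)) = (x.den : ℚ) * (y.den : ℚ) * y := by
      push_cast [hk]; rw [mul_assoc, hcy]; ring
    have hmk : m ≠ 0 ∨ k ≠ 0 := by
      rcases hxy with h | h
      · left
        intro h0
        exact (mul_ne_zero (mul_ne_zero hdx hdy) h) (by rw [← hme]; exact_mod_cast h0)
      · right
        intro h0
        exact (mul_ne_zero (mul_ne_zero hdx hdy) h) (by rw [← hke]; exact_mod_cast h0)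
    obtain ⟨l, P₀, hP₀, hfold⟩ := key (m.natAbs + k.natAbs) m k le_rfl hmk
    refine ⟨l, P₀, hP₀, ?_⟩
    have hP : Projectivization.mk ℚ v hv = pmk x y hxy := by
      apply (Projectivization.mk_eq_mk_iff' ℚ _ _ _ _).2 ⟨1, ?_⟩
      rw [hveq]; funext i; fin_cases i <;> simp
    have hP2 : pmk x y hxy = pmk ((m : ℤ) : ℚ) ((k : ℤ) : ℚ) (int_ne_cast hmk) := by
      refine (pmk_eq_pmk _ _ ((x.den : ℚ) * (y.den : ℚ)) ?_ ?_).symm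
      · exact hme.symm
      · exact hke.symm
    rw [hP, hP2, hfold]
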